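/- arXiv:2103.11532 — 2 statements merged into one kernel-verified Lean document; each statement's English description precedes it below -/
import Mathlib

section
/- Let R be a commutative integral domain with unit, and let q be an invertible element of R which is not a root of unity (i.e. q^n ≠ 1 for every positive integer n). Let r and k be positive integers, let c_1, …, c_k ∈ R, and let n_1, …, n_k ∈ ℤ^r be pairwise distinct. Let Λ be an additive submonoid of ℤ^r such that the subgroup of ℤ^r generated by Λ has rank r. If for every m ∈ Λ one has Σ_{i=1}^k c_i · q^{n_i ⋅ m} = 0 (where n_i ⋅ m = Σ_{a=1}^r n_i(a) m(a) is the standard dot product and q^s for s ∈ ℤ denotes the integer power of the unit q), then c_i = 0 for all i = 1, …, k. -/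
open Function

/-- dot product -/
private def dtp {r : ℕ} (v m : Fin r → ℤ) : ℤ := ∑ a, v a * m a

private lemma dtp_add {r : ℕ} (v m m' : Fin r → ℤ) :
    dtp v (m + m') = dtp v m + dtp v m' := by
  simp [dtp, mul_add, Finset.sum_add_distrib]

private lemma dtp_nsmul {r : ℕ} (v m : Fin r → ℤ) (t : ℕ) :
    dtp v (t • m) = (t : ℤ) * dtp v m := by
  simp [dtp, Finset.mul_sum, mul_left_comm]

private lemma dtp_sub_left {r : ℕ} (v w m : Fin r → ℤ) :
    dtp (v - w) m = dtp v m - dtp w m := by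
  simp [dtp, sub_mul, Finset.sum_sub_distrib]

/-- If the span of Λ has full rank, every nonzero linear form is nonzero somewhere on Λ. -/
private lemma exists_dtp_ne_zero {r : ℕ} (Λ : AddSubmonoid (Fin r → ℤ))
    (hΛ : Module.finrank ℤ (Submodule.span ℤ (Λ : Set (Fin r → ℤ))) = r)
    {v : Fin r → ℤ} (hv : v ≠ 0) :
    ∃ m ∈ Λ, dtp v m ≠ 0 := by
  by_contra hc
  push_neg at hc
  set f : (Fin r → ℤ) →ₗ[ℤ] ℤ :=
    ∑ a, v a • (LinearMap.proj a : (Fin r → ℤ) →ₗ[ℤ] ℤ) with hf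
  have hfapp : ∀ m, f m = dtp v m := by
    intro m
    simp [hf, dtp, LinearMap.sum_apply]
  have hspan : Submodule.span ℤ (Λ : Set (Fin r → ℤ)) ≤ LinearMap.ker f := by
    rw [Submodule.span_le]
    intro m hm
    simp only [SetLike.mem_coe, LinearMap.mem_ker, hfapp]
    exact hc m hm
  have h1 : r ≤ Module.finrank ℤ (LinearMap.ker f) := by
    have := Submodule.finrank_mono hspan
    rwa [hΛ] at this
  have hfv : f v ≠ 0 := by
    rw [hfapp]
    intro h0
    apply hv
    have hnn : ∀ a ∈ Finset.univ, (0:ℤ) ≤ v a * v a := fun a _ => mul_self_nonneg _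
    have := (Finset.sum_eq_zero_iff_of_nonneg hnn).mp h0
    funext a
    have := this a (Finset.mem_univ a)
    exact mul_self_eq_zero.mp this
  have hrng : Nontrivial (LinearMap.range f) := by
    refine Submodule.nontrivial_iff_ne_bot.mpr ?_
    intro hb
    exact hfv (by simpa [LinearMap.range_eq_bot.mp hb] using rfl)
  have h2 : 0 < Module.finrank ℤ (LinearMap.range f) := Module.finrank_pos
  have h3 := Submodule.finrank_quotient_add_finrank (LinearMap.ker f)
  have h4 : Module.finrank ℤ ((Fin r → ℤ) ⧸ LinearMap.ker f)
      = Module.finrank ℤ (LinearMap.range f) := f.quotKerEquivRange.finrank_eq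
  have h5 : Module.finrank ℤ (Fin r → ℤ) = r := Module.finrank_fin_fun ℤ
  omega

/-- Avoid finitely many hyperplanes. -/
private lemma exists_avoid {r : ℕ} (Λ : AddSubmonoid (Fin r → ℤ))
    (hΛ : Module.finrank ℤ (Submodule.span ℤ (Λ : Set (Fin r → ℤ))) = r)
    (V : Finset (Fin r → ℤ)) (hV : ∀ v ∈ V, v ≠ 0) :
    ∃ m ∈ Λ, ∀ v ∈ V, dtp v m ≠ 0 := by
  classical
  induction V using Finset.induction_on with
  | empty => exact ⟨0, Λ.zero_mem, by simp⟩
  | @insert v₀ s hv₀s ih =>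
    obtain ⟨m, hm, hgood⟩ := ih (fun v hv => hV v (Finset.mem_insert_of_mem hv))
    obtain ⟨l, hl, hlv⟩ := exists_dtp_ne_zero Λ hΛ (hV v₀ (Finset.mem_insert_self v₀ s))
    set T : ℕ := ((insert v₀ s).sup fun u => (dtp u m).natAbs) + 1 with hT
    refine ⟨m + T • l, Λ.add_mem hm (AddSubmonoid.nsmul_mem Λ hl T), ?_⟩
    intro w hw
    rw [dtp_add, dtp_nsmul]
    intro hzero
    have hTw : (dtp w m).natAbs ≤ T - 1 := by
      have hs : (dtp w m).natAbs ≤ (insert v₀ s).sup fun u => (dtp u m).natAbs := by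
        exact Finset.le_sup (f := fun u => (dtp u m).natAbs) hw
      omega
    by_cases hb : dtp w l = 0
    · rw [hb, mul_zero, add_zero] at hzero
      rcases Finset.mem_insert.mp hw with rfl | hws
      · exact hlv hb
      · exact hgood w hws hzero
    · have habs : (dtp w m).natAbs = T * (dtp w l).natAbs := by
        have : dtp w m = -((T:ℤ) * dtp w l) := by linarith
        rw [this]
        simp [Int.natAbs_mul]
      have h1 : 1 ≤ (dtp w l).natAbs :=
        Nat.one_le_iff_ne_zero.mpr (fun hh => hb (Int.natAbs_eq_zero.mp hh))
      have h2 : T ≤ T * (dtp w l).natAbs := Nat.le_mul_of_pos_right T h1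
      omega

/-- If `q` is a unit of a commutative domain `R` which is not a root of
unity, `n₁,…,n_k ∈ ℤ^r` are pairwise distinct, and `Λ` is an additive submonoid of
`ℤ^r` whose generated subgroup has rank `r`, then `∑ i, c_i • q^(n_i ⋅ m) = 0` for all
`m ∈ Λ` forces all coefficients `c_i` to vanish. -/
theorem skein_lemma_root_of_unity
    {R : Type*} [CommRing R] [IsDomain R] (q : Rˣ)
    (hq : ∀ n : ℕ, 0 < n → q ^ n ≠ 1)
    (r k : ℕ) (hr : 0 < r) (hk : 0 < k)
    (c : Fin k → R) (n : Fin k → (Fin r → ℤ))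
    (hn : Function.Injective n)
    (Λ : AddSubmonoid (Fin r → ℤ))
    (hΛ : Module.finrank ℤ (Submodule.span ℤ (Λ : Set (Fin r → ℤ))) = r)
    (h : ∀ m ∈ Λ, ∑ i, c i * ((q ^ (∑ a, n i a * m a) : Rˣ) : R) = 0) :
    ∀ i, c i = 0 := by
  classical
  -- q has infinite order, so zpow is injective
  have hfin : ¬ IsOfFinOrder q := by
    rw [isOfFinOrder_iff_pow_eq_one]
    rintro ⟨N, hN0, hN1⟩
    exact hq N hN0 hN1
  have hinj : Function.Injective fun s : ℤ => q ^ s :=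
    injective_zpow_iff_not_isOfFinOrder.mpr hfin
  -- hyperplane-avoiding element
  set V : Finset (Fin r → ℤ) :=
    (Finset.image (fun p : Fin k × Fin k => n p.1 - n p.2) Finset.univ).erase 0 with hV
  obtain ⟨m₀, hm₀, hgood⟩ := exists_avoid Λ hΛ V (fun v hv => Finset.ne_of_mem_erase hv)
  set d : Fin k → ℤ := fun i => dtp (n i) m₀ with hd
  have hdinj : Function.Injective d := by
    intro i j hij
    by_contra hne
    have hmem : n i - n j ∈ V := by
      refine Finset.mem_erase.mpr ⟨?_, Finset.mem_image.mpr ⟨(i, j), Finset.mem_univ _, rfl⟩⟩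
      exact sub_ne_zero.mpr (fun hh => hne (hn hh))
    have := hgood _ hmem
    rw [dtp_sub_left] at this
    exact this (sub_eq_zero.mpr hij)
  set f : Fin k → R := fun i => ((q ^ d i : Rˣ) : R) with hfd
  have hfinj : Function.Injective f := by
    intro i j hij
    apply hdinj
    exact hinj (Units.ext hij)
  have key : ∀ t : Fin k, ∑ j, c j * f j ^ (t : ℕ) = 0 := by
    intro t
    have hmem : ((t : ℕ) • m₀) ∈ Λ := AddSubmonoid.nsmul_mem Λ hm₀ _
    have := h _ hmem
    have hsum : ∀ j, (∑ a, n j a * ((t : ℕ) • m₀) a) = d j * (t : ℕ) := by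
      intro j
      have : (∑ a, n j a * ((t : ℕ) • m₀) a) = dtp (n j) ((t : ℕ) • m₀) := rfl
      rw [this, dtp_nsmul, hd, mul_comm]
    rw [← this]
    apply Finset.sum_congr rfl
    intro j _
    congr 1
    rw [hsum j, zpow_mul, zpow_natCast, hfd]
    simp
  have := Matrix.eq_zero_of_forall_pow_sum_mul_pow_eq_zero hfinj key
  intro i
  exact congrFun this i
end

section
/- Let r and k be positive integers, let n_1, …, n_k ∈ ℤ^r be pairwise distinct vectors, and let Λ be an additive submonoid of ℤ^r such that the subgroup of ℤ^r generated by Λ has rank r. Then there exists m ∈ Λ such that the integers s_i := n_i ⋅ m (for i = 1, …, k) are pairwise distinct, where n ⋅ m denotes the standard dot product Σ_{a=1}^r n(a) m(a). -/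
/-- dot product as a linear map -/
private def dotL {r : ℕ} (v : Fin r → ℤ) : (Fin r → ℤ) →ₗ[ℤ] ℤ where
  toFun m := ∑ a, v a * m a
  map_add' x y := by simp [mul_add, Finset.sum_add_distrib]
  map_smul' c x := by simp [Finset.mul_sum, mul_left_comm]

private lemma lemA {r : ℕ} (Λ : AddSubmonoid (Fin r → ℤ))
    (hΛ : Module.finrank ℤ (Submodule.span ℤ (Λ : Set (Fin r → ℤ))) = r)
    {v : Fin r → ℤ} (hv : v ≠ 0) :
    ∃ m ∈ Λ, ∑ a, v a * m a ≠ 0 := by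
  by_contra h
  push_neg at h
  have hker : Submodule.span ℤ (Λ : Set (Fin r → ℤ)) ≤ LinearMap.ker (dotL v) := by
    rw [Submodule.span_le]
    intro m hm
    exact h m hm
  -- v ∈ something nonzero: f (Pi.single a 1) = v a
  obtain ⟨a, ha⟩ : ∃ a, v a ≠ 0 := by
    by_contra h'
    push_neg at h'
    exact hv (funext h')
  have hnt : Nontrivial (LinearMap.range (dotL v)) := by
    refine Submodule.nontrivial_iff_ne_bot.mpr ?_
    intro hb
    have : dotL v (Pi.single a 1) = 0 := by
      have := LinearMap.mem_range_self (dotL v) (Pi.single a 1)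
      rw [hb] at this
      simpa using this
    simp [dotL, Pi.single_apply] at this
    exact ha this
  have h1 : Module.finrank ℤ ((Fin r → ℤ) ⧸ LinearMap.ker (dotL v))
      + Module.finrank ℤ (LinearMap.ker (dotL v)) = r := by
    rw [Submodule.finrank_quotient_add_finrank]
    simp
  have h2 : Module.finrank ℤ ((Fin r → ℤ) ⧸ LinearMap.ker (dotL v))
      = Module.finrank ℤ (LinearMap.range (dotL v)) :=
    LinearEquiv.finrank_eq (dotL v).quotKerEquivRange
  have h3 : 0 < Module.finrank ℤ (LinearMap.range (dotL v)) := Module.finrank_pos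
  have h4 := Submodule.finrank_mono (R := ℤ) hker
  omega

private lemma lemB {r : ℕ} (Λ : AddSubmonoid (Fin r → ℤ))
    (hΛ : Module.finrank ℤ (Submodule.span ℤ (Λ : Set (Fin r → ℤ))) = r)
    (S : Finset (Fin r → ℤ)) (hS : ∀ v ∈ S, v ≠ 0) :
    ∃ m ∈ Λ, ∀ v ∈ S, ∑ a, v a * m a ≠ 0 := by
  induction S using Finset.induction_on with
  | empty => exact ⟨0, Λ.zero_mem, by simp⟩
  | @insert v S hvS ih =>
    have hv0 : v ≠ 0 := hS v (Finset.mem_insert_self v S)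
    obtain ⟨m, hm, hmS⟩ := ih (fun w hw => hS w (Finset.mem_insert_of_mem hw))
    obtain ⟨m', hm', hm'v⟩ := lemA Λ hΛ hv0
    obtain ⟨t, ht⟩ : ∃ t : ℕ, t = (insert v S).sup (fun w => (∑ a, w a * m a).natAbs) + 1 :=
      ⟨_, rfl⟩
    refine ⟨m + t • m', Λ.add_mem hm (AddSubmonoid.nsmul_mem Λ hm' t), ?_⟩
    intro w hw
    have hexp : ∑ a, w a * (m + t • m') a
        = (∑ a, w a * m a) + (t : ℤ) * ∑ a, w a * m' a := by
      rw [Finset.mul_sum, ← Finset.sum_add_distrib]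
      refine Finset.sum_congr rfl fun a _ => ?_
      simp only [Pi.add_apply, Pi.smul_apply, nsmul_eq_mul]
      simp only [Pi.mul_apply, Pi.natCast_apply]
      ring
    rw [hexp]
    have hbound : (∑ a, w a * m a).natAbs < t := by
      rw [ht]
      exact Nat.lt_succ_of_le (Finset.le_sup (f := fun u => (∑ a, u a * m a).natAbs) hw)
    by_cases hB : (∑ a, w a * m' a) = 0
    · -- then need ∑ w a * m a ≠ 0
      have hwS : w ∈ S ∨ w = v := by
        rcases Finset.mem_insert.mp hw with h | h
        · exact Or.inr h
        · exact Or.inl h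
      rcases hwS with h | rfl
      · simpa [hB] using hmS w h
      · exact absurd hB hm'v
    · intro hzero
      have : (∑ a, w a * m a) = -((t : ℤ) * ∑ a, w a * m' a) := by linarith
      have habs : (∑ a, w a * m a).natAbs = t * (∑ a, w a * m' a).natAbs := by
        rw [this]
        simp [Int.natAbs_mul]
      have h1 : 1 ≤ (∑ a, w a * m' a).natAbs := Nat.one_le_iff_ne_zero.mpr (Int.natAbs_ne_zero.mpr hB)
      nlinarith [hbound, habs, h1]

/-- Given pairwise distinct vectors `n₁,…,n_k ∈ ℤ^r` and an additive
submonoid `Λ ⊆ ℤ^r` whose generated subgroup has rank `r`, there is `m ∈ Λ` such that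
the dot products `n_i ⋅ m` are pairwise distinct. -/
theorem exists_separating_vector
    (r k : ℕ) (hr : 0 < r) (hk : 0 < k)
    (n : Fin k → (Fin r → ℤ)) (hn : Function.Injective n)
    (Λ : AddSubmonoid (Fin r → ℤ))
    (hΛ : Module.finrank ℤ (Submodule.span ℤ (Λ : Set (Fin r → ℤ))) = r) :
    ∃ m ∈ Λ, ∀ i j : Fin k, i ≠ j →
      (∑ a, n i a * m a) ≠ (∑ a, n j a * m a) := by
  classical
  set S : Finset (Fin r → ℤ) :=
    Finset.image (fun p : Fin k × Fin k => n p.1 - n p.2)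
      (Finset.univ.filter fun p => p.1 ≠ p.2) with hSdef
  have hS : ∀ v ∈ S, v ≠ 0 := by
    intro v hv
    simp only [hSdef, Finset.mem_image, Finset.mem_filter] at hv
    obtain ⟨p, ⟨_, hne⟩, rfl⟩ := hv
    intro h0
    exact hne (hn (sub_eq_zero.mp h0))
  obtain ⟨m, hm, hsep⟩ := lemB Λ hΛ S hS
  refine ⟨m, hm, fun i j hij heq => ?_⟩
  have hv : (n i - n j) ∈ S := by
    simp only [hSdef, Finset.mem_image, Finset.mem_filter]
    exact ⟨(i, j), ⟨Finset.mem_univ _, hij⟩, rfl⟩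
  apply hsep _ hv
  simp [Pi.sub_apply, sub_mul, Finset.sum_sub_distrib, heq]
end
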